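/- arXiv:1905.11867 — 5 statements merged into one kernel-verified Lean document; each statement's English description precedes it below -/
import Mathlib

section
/- Unrolling the soft value gradient: under the soft Bellman recursion, for every state s and every horizon N ≥ 1, ∇_λ V_λ(s) = Σ_{τ=0}^{N−1} γ^τ Σ_{s',a} P^L_τ(s',a | s) ∇_λ R_λ(s',a) + γ^N Σ_{s'} P^L_N(s' | s) ∇_λ V_λ(s'), where P^L_τ(·|s) are the visitation probabilities of the softmax policy π_λ started from state s. -/
set_option maxHeartbeats 1600000 in
/-- Unrolling the soft value gradient up to horizon `N`:
`∇V(s₀) = Σ_{τ<N} γ^τ Σ_{s',a} P^L_τ(s',a|s₀) ∇R(s',a) + γ^N Σ_{s'} P^L_N(s'|s₀) ∇V(s')`. -/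
theorem soft_value_gradient_unrolled {d : ℕ} {S A : Type} [Fintype S] [Fintype A]
    [Nonempty S] [Nonempty A] [DecidableEq S] [DecidableEq A]
    (γ : ℝ) (hγ0 : 0 ≤ γ) (hγ1 : γ < 1)
    (T : S → A → S → ℝ) (hT : ∀ s a s', 0 ≤ T s a s')
    (hTsum : ∀ s a, ∑ s', T s a s' = 1)
    (R Q : (Fin d → ℝ) → S → A → ℝ) (V : (Fin d → ℝ) → S → ℝ)
    (hR : ∀ s a, Differentiable ℝ (fun l => R l s a))
    (hV : ∀ s, Differentiable ℝ (fun l => V l s))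
    (l : Fin d → ℝ)
    (hQ : ∀ l' s a, Q l' s a = R l' s a + γ * ∑ s', T s a s' * V l' s')
    (hVdef : ∀ l' s, V l' s = Real.log (∑ a, Real.exp (Q l' s a)))
    (pol : S → A → ℝ)
    (hpol : ∀ s a, pol s a = Real.exp (Q l s a) / ∑ a', Real.exp (Q l s a'))
    (PL : S → ℕ → S → ℝ)
    (hPL0 : ∀ s0 s, PL s0 0 s = if s = s0 then 1 else 0)
    (hPLrec : ∀ s0 τ s', PL s0 (τ + 1) s' = ∑ s, ∑ a, PL s0 τ s * pol s a * T s a s')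
    (s0 : S) (N : ℕ) (hN : 1 ≤ N) :
    fderiv ℝ (fun l' => V l' s0) l
      = (∑ τ ∈ Finset.range N, γ ^ τ •
            ∑ s', ∑ a, (PL s0 τ s' * pol s' a) • fderiv ℝ (fun l' => R l' s' a) l)
        + γ ^ N • ∑ s', PL s0 N s' • fderiv ℝ (fun l' => V l' s') l := by
  classical
  set DR : S → A → ((Fin d → ℝ) →L[ℝ] ℝ) := fun s a => fderiv ℝ (fun l' => R l' s a) l with hDRdef
  set DV : S → ((Fin d → ℝ) →L[ℝ] ℝ) := fun s => fderiv ℝ (fun l' => V l' s) l with hDVdef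
  -- derivative of Q
  have hQderiv : ∀ s a, HasFDerivAt (fun l' => Q l' s a)
      (DR s a + γ • ∑ s', T s a s' • DV s') l := by
    intro s a
    have hfun : (fun l' => Q l' s a)
        = fun l' => R l' s a + γ * ∑ s', T s a s' * V l' s' := funext fun l' => hQ l' s a
    rw [hfun]
    have h1 : HasFDerivAt (fun l' => R l' s a) (DR s a) l := (hR s a l).hasFDerivAt
    have h3 : HasFDerivAt (fun l' => ∑ s', T s a s' * V l' s') (∑ s', T s a s' • DV s') l := by
      have := HasFDerivAt.fun_sum (fun s' (_ : s' ∈ Finset.univ) =>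
        ((hV s' l).hasFDerivAt.const_mul (T s a s')))
      simpa using this
    exact h1.add (h3.const_mul γ)
  -- positivity of partition function
  have hEpos : ∀ s, 0 < ∑ a, Real.exp (Q l s a) :=
    fun s => Finset.sum_pos (fun a _ => Real.exp_pos _) Finset.univ_nonempty
  -- key one-step identity
  have key : ∀ s, DV s = (∑ a, pol s a • DR s a)
      + γ • ∑ s', (∑ a, pol s a * T s a s') • DV s' := by
    intro s
    have hfun : (fun l' => V l' s) = fun l' => Real.log (∑ a, Real.exp (Q l' s a)) :=
      funext fun l' => hVdef l' s
    have hsum : HasFDerivAt (fun l' => ∑ a, Real.exp (Q l' s a))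
        (∑ a, Real.exp (Q l s a) • (DR s a + γ • ∑ s', T s a s' • DV s')) l := by
      have := HasFDerivAt.fun_sum (fun a (_ : a ∈ Finset.univ) => (hQderiv s a).exp)
      simpa using this
    have hlog : HasFDerivAt (fun l' => Real.log (∑ a, Real.exp (Q l' s a)))
        ((∑ a, Real.exp (Q l s a))⁻¹ •
          ∑ a, Real.exp (Q l s a) • (DR s a + γ • ∑ s', T s a s' • DV s')) l :=
      hsum.log (ne_of_gt (hEpos s))
    have hDV : DV s = (∑ a, Real.exp (Q l s a))⁻¹ •
        ∑ a, Real.exp (Q l s a) • (DR s a + γ • ∑ s', T s a s' • DV s') := by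
      rw [hDVdef]; simp only [hfun]; exact hlog.fderiv
    rw [hDV, Finset.smul_sum]
    have hterm : ∀ a, (∑ a, Real.exp (Q l s a))⁻¹ •
        Real.exp (Q l s a) • (DR s a + γ • ∑ s', T s a s' • DV s')
        = pol s a • DR s a + γ • ∑ s', (pol s a * T s a s') • DV s' := by
      intro a
      rw [smul_smul, smul_add]
      have hp : (∑ a, Real.exp (Q l s a))⁻¹ * Real.exp (Q l s a) = pol s a := by
        rw [hpol]; ring
      rw [hp]
      congr 1
      simp only [Finset.smul_sum, smul_smul]
      refine Finset.sum_congr rfl fun s' _ => ?_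
      congr 1
      ring
    rw [Finset.sum_congr rfl fun a _ => hterm a, Finset.sum_add_distrib]
    congr 1
    rw [← Finset.smul_sum, Finset.sum_comm]
    congr 1
    exact Finset.sum_congr rfl fun s' _ => by rw [← Finset.sum_smul]
  -- main induction
  have main : ∀ n, DV s0 = (∑ τ ∈ Finset.range n, γ ^ τ •
        ∑ s', ∑ a, (PL s0 τ s' * pol s' a) • DR s' a)
      + γ ^ n • ∑ s', PL s0 n s' • DV s' := by
    intro n
    induction n with
    | zero => simp [hPL0]
    | succ n ih =>
      rw [ih]
      have hstep : (∑ s', PL s0 n s' • DV s')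
          = (∑ s', ∑ a, (PL s0 n s' * pol s' a) • DR s' a)
            + γ • ∑ s'', PL s0 (n + 1) s'' • DV s'' := by
        calc (∑ s', PL s0 n s' • DV s')
            = ∑ s', (PL s0 n s' • ∑ a, pol s' a • DR s' a
              + PL s0 n s' • γ • ∑ s'', (∑ a, pol s' a * T s' a s'') • DV s'') := by
              refine Finset.sum_congr rfl fun s' _ => ?_
              rw [key s', smul_add]
          _ = (∑ s', ∑ a, (PL s0 n s' * pol s' a) • DR s' a)
              + γ • ∑ s'', PL s0 (n + 1) s'' • DV s'' := by
              rw [Finset.sum_add_distrib]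
              congr 1
              · refine Finset.sum_congr rfl fun s' _ => ?_
                rw [Finset.smul_sum]
                exact Finset.sum_congr rfl fun a _ => by rw [smul_smul]
              · calc ∑ s', PL s0 n s' • γ • ∑ s'', (∑ a, pol s' a * T s' a s'') • DV s''
                    = ∑ s'', ∑ s', (γ * (PL s0 n s' * ∑ a, pol s' a * T s' a s'')) • DV s'' := by
                      rw [Finset.sum_comm]
                      refine Finset.sum_congr rfl fun s' _ => ?_
                      rw [Finset.smul_sum, Finset.smul_sum]
                      refine Finset.sum_congr rfl fun s'' _ => ?_
                      rw [smul_smul, smul_smul]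
                      congr 1
                      ring
                  _ = γ • ∑ s'', PL s0 (n + 1) s'' • DV s'' := by
                      rw [Finset.smul_sum]
                      refine Finset.sum_congr rfl fun s'' _ => ?_
                      rw [smul_smul, hPLrec, ← Finset.sum_smul]
                      congr 1
                      simp only [Finset.mul_sum]
                      refine Finset.sum_congr rfl fun s' _ => ?_
                      refine Finset.sum_congr rfl fun a _ => ?_
                      ring
          _ = _ := rfl
      rw [hstep, smul_add, smul_smul, ← pow_succ, Finset.sum_range_succ, add_assoc]
  exact main N
end

section
/- If the gradients ∇_λ V_λ(s) are uniformly bounded over states, then under the soft Bellman recursion ∇_λ V_λ(s) = Σ_{s',a} ρ^{π_λ, s}(s',a) ∇_λ R_λ(s',a), where ρ^{π_λ, s} is the discounted state-action occupancy measure of the softmax policy started at state s. -/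
open Filter Topology

lemma occ_telescope {S : Type} [Fintype S] [DecidableEq S]
    {E : Type} [NormedAddCommGroup E] [NormedSpace ℝ E]
    (γ : ℝ) (G b : S → E) (M : S → S → ℝ)
    (hrec : ∀ s, G s = b s + γ • ∑ s', M s s' • G s')
    (PL : ℕ → S → ℝ) (s0 : S)
    (hPL0 : ∀ s, PL 0 s = if s = s0 then 1 else 0)
    (hPLr : ∀ τ s', PL (τ + 1) s' = ∑ s, PL τ s * M s s') :
    ∀ n, G s0 = (∑ τ ∈ Finset.range n, γ ^ τ • ∑ s, PL τ s • b s)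
        + γ ^ n • ∑ s, PL n s • G s := by
  intro n
  induction n with
  | zero =>
      simp only [Finset.range_zero, Finset.sum_empty, pow_zero, one_smul, zero_add]
      rw [show (∑ s, PL 0 s • G s) = G s0 by
        simp only [hPL0]
        simp [Finset.sum_ite_eq']]
  | succ n ih =>
      rw [ih]
      have hexp : (∑ s, PL n s • G s)
          = (∑ s, PL n s • b s) + γ • ∑ s', PL (n+1) s' • G s' := by
        calc (∑ s, PL n s • G s)
            = ∑ s, (PL n s • b s + γ • PL n s • ∑ s', M s s' • G s') := by
              refine Finset.sum_congr rfl fun s _ => ?_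
              rw [hrec s, smul_add, smul_comm]
          _ = (∑ s, PL n s • b s) + γ • ∑ s, PL n s • ∑ s', M s s' • G s' := by
              rw [Finset.sum_add_distrib, Finset.smul_sum]
          _ = (∑ s, PL n s • b s) + γ • ∑ s', PL (n+1) s' • G s' := by
              congr 1
              congr 1
              calc (∑ s, PL n s • ∑ s', M s s' • G s')
                  = ∑ s, ∑ s', (PL n s * M s s') • G s' := by
                    refine Finset.sum_congr rfl fun s _ => ?_
                    rw [Finset.smul_sum]
                    exact Finset.sum_congr rfl fun s' _ => (smul_smul _ _ _)
                _ = ∑ s', ∑ s, (PL n s * M s s') • G s' := Finset.sum_comm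
                _ = ∑ s', PL (n+1) s' • G s' := by
                    refine Finset.sum_congr rfl fun s' _ => ?_
                    rw [hPLr, ← Finset.sum_smul]
      rw [hexp, smul_add, Finset.sum_range_succ, pow_succ]
      rw [add_assoc]
      congr 2
      rw [mul_smul]

set_option maxHeartbeats 2000000 in
/-- With uniformly bounded value gradients, the soft value gradient equals the
occupancy-weighted sum of reward gradients:
`∇V(s₀) = Σ_{s',a} ρ^{π_λ,s₀}(s',a) ∇R(s',a)`. -/
theorem soft_value_gradient_occupancy {d : ℕ} {S A : Type} [Fintype S] [Fintype A]
    [Nonempty S] [Nonempty A] [DecidableEq S] [DecidableEq A]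
    (γ : ℝ) (hγ0 : 0 ≤ γ) (hγ1 : γ < 1)
    (T : S → A → S → ℝ) (hT : ∀ s a s', 0 ≤ T s a s')
    (hTsum : ∀ s a, ∑ s', T s a s' = 1)
    (R Q : (Fin d → ℝ) → S → A → ℝ) (V : (Fin d → ℝ) → S → ℝ)
    (hR : ∀ s a, Differentiable ℝ (fun l => R l s a))
    (hV : ∀ s, Differentiable ℝ (fun l => V l s))
    (l : Fin d → ℝ)
    (hbound : ∃ C, ∀ s, ‖fderiv ℝ (fun l' => V l' s) l‖ ≤ C)
    (hQ : ∀ l' s a, Q l' s a = R l' s a + γ * ∑ s', T s a s' * V l' s')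
    (hVdef : ∀ l' s, V l' s = Real.log (∑ a, Real.exp (Q l' s a)))
    (pol : S → A → ℝ)
    (hpol : ∀ s a, pol s a = Real.exp (Q l s a) / ∑ a', Real.exp (Q l s a'))
    (PL : S → ℕ → S → ℝ)
    (hPL0 : ∀ s0 s, PL s0 0 s = if s = s0 then 1 else 0)
    (hPLrec : ∀ s0 τ s', PL s0 (τ + 1) s' = ∑ s, ∑ a, PL s0 τ s * pol s a * T s a s')
    (s0 : S) :
    fderiv ℝ (fun l' => V l' s0) l
      = ∑ s', ∑ a,
          (∑' τ : ℕ, γ ^ τ * (PL s0 τ s' * pol s' a)) •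
            fderiv ℝ (fun l' => R l' s' a) l := by
  classical
  obtain ⟨C₀, hC₀⟩ := hbound
  set G : S → ((Fin d → ℝ) →L[ℝ] ℝ) := fun s => fderiv ℝ (fun l' => V l' s) l with hGdef
  set D : S → A → ((Fin d → ℝ) →L[ℝ] ℝ) := fun s a => fderiv ℝ (fun l' => R l' s a) l with hDdef
  -- positivity of exp sums
  have hexppos : ∀ s, 0 < ∑ a, Real.exp (Q l s a) := fun s =>
    Finset.sum_pos (fun a _ => Real.exp_pos _) Finset.univ_nonempty
  have hpol_nonneg : ∀ s a, 0 ≤ pol s a := by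
    intro s a; rw [hpol]
    exact div_nonneg (Real.exp_pos _).le (hexppos s).le
  have hpol_sum : ∀ s, ∑ a, pol s a = 1 := by
    intro s
    simp only [hpol]
    rw [← Finset.sum_div, div_self (hexppos s).ne']
  -- derivative of Q
  have hQdiff : ∀ s a, HasFDerivAt (fun l' => Q l' s a)
      (D s a + γ • ∑ s', T s a s' • G s') l := by
    intro s a
    have h1 : HasFDerivAt (fun l' => R l' s a) (D s a) l := (hR s a l).hasFDerivAt
    have h3 : HasFDerivAt (fun l' => ∑ s', T s a s' * V l' s')
        (∑ s', T s a s' • G s') l :=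
      HasFDerivAt.fun_sum (fun s' _ => ((hV s' l).hasFDerivAt).const_mul _)
    have h5 := h1.add (h3.const_mul γ)
    have heq : (fun l' => Q l' s a)
        = fun l' => R l' s a + γ * ∑ s', T s a s' * V l' s' := by
      funext l'; rw [hQ]
    rw [heq]
    exact h5
  -- derivative of V
  have hVderiv : ∀ s, G s = ∑ a, pol s a • (D s a + γ • ∑ s', T s a s' • G s') := by
    intro s
    have h5 : HasFDerivAt (fun l' => ∑ a, Real.exp (Q l' s a))
        (∑ a, Real.exp (Q l s a) • (D s a + γ • ∑ s', T s a s' • G s')) l :=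
      HasFDerivAt.fun_sum (fun a _ => (hQdiff s a).exp)
    have h6 := h5.log (hexppos s).ne'
    have heq : (fun l' => V l' s) = (fun l' => Real.log (∑ a, Real.exp (Q l' s a))) := by
      funext l'; rw [hVdef]
    have h7 : G s = (∑ a, Real.exp (Q l s a))⁻¹ •
        ∑ a, Real.exp (Q l s a) • (D s a + γ • ∑ s', T s a s' • G s') := by
      rw [hGdef]
      simp only []
      rw [heq]
      exact h6.fderiv
    rw [h7, Finset.smul_sum]
    refine Finset.sum_congr rfl fun a _ => ?_
    rw [smul_smul, hpol, div_eq_inv_mul]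
  -- matrix-form recursion
  set b : S → ((Fin d → ℝ) →L[ℝ] ℝ) := fun s => ∑ a, pol s a • D s a with hbdef
  set M : S → S → ℝ := fun s s' => ∑ a, pol s a * T s a s' with hMdef
  have hrec : ∀ s, G s = b s + γ • ∑ s', M s s' • G s' := by
    intro s
    rw [hVderiv s]
    simp only [smul_add, Finset.sum_add_distrib]
    congr 1
    calc (∑ a, pol s a • γ • ∑ s', T s a s' • G s')
        = γ • ∑ a, ∑ s', (pol s a * T s a s') • G s' := by
          rw [Finset.smul_sum]
          refine Finset.sum_congr rfl fun a _ => ?_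
          rw [smul_comm, Finset.smul_sum]
          congr 1
          exact Finset.sum_congr rfl fun s' _ => (smul_smul _ _ _)
      _ = γ • ∑ s', M s s' • G s' := by
          congr 1
          rw [Finset.sum_comm]
          exact Finset.sum_congr rfl fun s' _ => by rw [hMdef, Finset.sum_smul]
  -- PL properties
  have hPLr : ∀ τ s', PL s0 (τ + 1) s' = ∑ s, PL s0 τ s * M s s' := by
    intro τ s'
    rw [hPLrec]
    exact Finset.sum_congr rfl fun s _ => by
      rw [hMdef, Finset.mul_sum]
      exact Finset.sum_congr rfl fun a _ => by ring
  have hPL_nonneg : ∀ τ s, 0 ≤ PL s0 τ s := by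
    intro τ
    induction τ with
    | zero => intro s; rw [hPL0]; split <;> norm_num
    | succ n ih =>
        intro s'
        rw [hPLr]
        exact Finset.sum_nonneg fun s _ =>
          mul_nonneg (ih s) (Finset.sum_nonneg fun a _ =>
            mul_nonneg (hpol_nonneg s a) (hT s a s'))
  have hPL_sum : ∀ τ, ∑ s, PL s0 τ s = 1 := by
    intro τ
    induction τ with
    | zero => simp [hPL0]
    | succ n ih =>
        calc (∑ s', PL s0 (n+1) s') = ∑ s', ∑ s, PL s0 n s * M s s' :=
            Finset.sum_congr rfl fun s' _ => hPLr n s'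
          _ = ∑ s, PL s0 n s * ∑ s', M s s' := by
            rw [Finset.sum_comm]
            exact Finset.sum_congr rfl fun s _ => (Finset.mul_sum _ _ _).symm
          _ = 1 := by
            rw [← ih]
            refine Finset.sum_congr rfl fun s _ => ?_
            have : (∑ s', M s s') = 1 := by
              rw [hMdef]
              simp only []
              rw [Finset.sum_comm]
              rw [show (∑ a, ∑ s', pol s a * T s a s') = ∑ a : A, pol s a * 1 by
                exact Finset.sum_congr rfl fun a _ => by rw [← Finset.mul_sum, hTsum]]
              simp [hpol_sum s]
            rw [this, mul_one]
  have hPL_le_one : ∀ τ s, PL s0 τ s ≤ 1 := by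
    intro τ s
    rw [← hPL_sum τ]
    exact Finset.single_le_sum (fun s' _ => hPL_nonneg τ s') (Finset.mem_univ s)
  -- telescoping
  have key := occ_telescope γ G b M hrec (PL s0) s0 (hPL0 s0) hPLr
  -- bound on G
  set C : ℝ := max C₀ 0 with hCdef
  have hC : ∀ s, ‖G s‖ ≤ C := fun s => le_trans (hC₀ s) (le_max_left _ _)
  have hC0 : (0:ℝ) ≤ C := le_max_right _ _
  -- remainder tends to zero
  have hrem : Tendsto (fun n => γ ^ n • ∑ s, PL s0 n s • G s) atTop (𝓝 0) := by
    apply squeeze_zero_norm (a := fun n => γ ^ n * C)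
    · intro n
      refine le_trans (norm_smul_le (γ ^ n) (∑ s, PL s0 n s • G s)) ?_
      rw [Real.norm_of_nonneg (pow_nonneg hγ0 n)]
      refine mul_le_mul_of_nonneg_left ?_ (pow_nonneg hγ0 n)
      calc ‖∑ s, PL s0 n s • G s‖ ≤ ∑ s, ‖PL s0 n s • G s‖ := norm_sum_le _ _
        _ ≤ ∑ s, PL s0 n s * C := by
          refine Finset.sum_le_sum fun s _ => ?_
          refine le_trans (norm_smul_le (PL s0 n s) (G s)) ?_
          rw [Real.norm_of_nonneg (hPL_nonneg n s)]
          exact mul_le_mul_of_nonneg_left (hC s) (hPL_nonneg n s)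
        _ = C := by rw [← Finset.sum_mul, hPL_sum n, one_mul]
    · have := (tendsto_pow_atTop_nhds_zero_of_lt_one hγ0 hγ1).mul_const C
      rwa [zero_mul] at this
  -- partial sums converge to G s0
  set g : ℕ → ((Fin d → ℝ) →L[ℝ] ℝ) := fun τ => γ ^ τ • ∑ s, PL s0 τ s • b s with hgdef
  have hps : Tendsto (fun n => ∑ τ ∈ Finset.range n, g τ) atTop (𝓝 (G s0)) := by
    have h1 : Tendsto (fun n => G s0 - γ ^ n • ∑ s, PL s0 n s • G s) atTop
        (𝓝 (G s0 - 0)) := Tendsto.const_sub _ hrem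
    rw [sub_zero] at h1
    refine h1.congr fun n => ?_
    rw [key n]; abel
  -- summability of g
  have hgsum : Summable g := by
    set B : ℝ := ∑ s : S, ‖b s‖ with hBdef
    refine Summable.of_norm_bounded (g := fun τ => γ ^ τ * B) ?_ ?_
    · exact (summable_geometric_of_lt_one hγ0 hγ1).mul_right B
    · intro τ
      simp only [hgdef]
      refine le_trans (norm_smul_le (γ ^ τ) (∑ s, PL s0 τ s • b s)) ?_
      rw [Real.norm_of_nonneg (pow_nonneg hγ0 τ)]
      refine mul_le_mul_of_nonneg_left ?_ (pow_nonneg hγ0 τ)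
      calc ‖∑ s, PL s0 τ s • b s‖ ≤ ∑ s, ‖PL s0 τ s • b s‖ := norm_sum_le _ _
        _ ≤ ∑ s : S, ‖b s‖ := by
          refine Finset.sum_le_sum fun s _ => ?_
          refine le_trans (norm_smul_le (PL s0 τ s) (b s)) ?_
          rw [Real.norm_of_nonneg (hPL_nonneg τ s)]
          calc PL s0 τ s * ‖b s‖ ≤ 1 * ‖b s‖ :=
              mul_le_mul_of_nonneg_right (hPL_le_one τ s) (norm_nonneg _)
            _ = ‖b s‖ := one_mul _
  have hGsum : HasSum g (G s0) := by
    have h1 := hgsum.hasSum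
    have h2 := h1.tendsto_sum_nat
    rwa [tendsto_nhds_unique h2 hps] at h1
  -- rewrite g as double sum of coefficients
  have hgeq : ∀ τ, g τ = ∑ s', ∑ a, (γ ^ τ * (PL s0 τ s' * pol s' a)) • D s' a := by
    intro τ
    simp only [hgdef]
    rw [Finset.smul_sum]
    refine Finset.sum_congr rfl fun s' _ => ?_
    simp only [hbdef]
    rw [Finset.smul_sum, Finset.smul_sum]
    refine Finset.sum_congr rfl fun a _ => ?_
    rw [smul_smul, smul_smul, mul_assoc]
  -- summability of coefficients
  have hcsum : ∀ s' a, Summable (fun τ => γ ^ τ * (PL s0 τ s' * pol s' a)) := by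
    intro s' a
    refine Summable.of_nonneg_of_le (fun τ => ?_) (fun τ => ?_)
      (summable_geometric_of_lt_one hγ0 hγ1)
    · exact mul_nonneg (pow_nonneg hγ0 τ)
        (mul_nonneg (hPL_nonneg τ s') (hpol_nonneg s' a))
    · have hpolle : pol s' a ≤ 1 := by
        rw [← hpol_sum s']
        exact Finset.single_le_sum (fun a' _ => hpol_nonneg s' a') (Finset.mem_univ a)
      have h11 : PL s0 τ s' * pol s' a ≤ 1 := by
        calc PL s0 τ s' * pol s' a ≤ 1 * 1 :=
            mul_le_mul (hPL_le_one τ s') hpolle (hpol_nonneg s' a) zero_le_one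
          _ = 1 := one_mul 1
      calc γ ^ τ * (PL s0 τ s' * pol s' a) ≤ γ ^ τ * 1 :=
          mul_le_mul_of_nonneg_left h11 (pow_nonneg hγ0 τ)
        _ = γ ^ τ := mul_one _
  -- the other HasSum
  have hGsum2 : HasSum g (∑ s', ∑ a,
      (∑' τ : ℕ, γ ^ τ * (PL s0 τ s' * pol s' a)) • D s' a) := by
    have h1 : ∀ s' ∈ Finset.univ, HasSum
        (fun τ => ∑ a, (γ ^ τ * (PL s0 τ s' * pol s' a)) • D s' a)
        (∑ a, (∑' τ : ℕ, γ ^ τ * (PL s0 τ s' * pol s' a)) • D s' a) := by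
      intro s' _
      refine hasSum_sum fun a _ => ?_
      exact ((hcsum s' a).hasSum).smul_const (D s' a)
    have h2 := hasSum_sum h1
    exact HasSum.congr_fun h2 hgeq
  exact hGsum.unique hGsum2
end

section
/- Gradient of the expected initial soft value: under the soft Bellman setting with bounded value gradients, ∇_λ Σ_s P_0(s) V_λ(s) = Σ_{s,a} ρ^{π_λ}(s,a) ∇_λ R_λ(s,a), where ρ^{π_λ} is the discounted occupancy measure with initial distribution P_0. -/
set_option maxHeartbeats 1600000 in
/-- Gradient of the expected initial soft value:
`∇ Σ_s P₀(s) V(s) = Σ_{s,a} ρ^{π_λ}(s,a) ∇R(s,a)`. -/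
theorem expected_initial_value_gradient {d : ℕ} {S A : Type} [Fintype S] [Fintype A]
    [Nonempty S] [Nonempty A]
    (γ : ℝ) (hγ0 : 0 ≤ γ) (hγ1 : γ < 1)
    (P0 : S → ℝ) (hP0 : ∀ s, 0 ≤ P0 s) (hP0sum : ∑ s, P0 s = 1)
    (T : S → A → S → ℝ) (hT : ∀ s a s', 0 ≤ T s a s')
    (hTsum : ∀ s a, ∑ s', T s a s' = 1)
    (R Q : (Fin d → ℝ) → S → A → ℝ) (V : (Fin d → ℝ) → S → ℝ)
    (hR : ∀ s a, Differentiable ℝ (fun l => R l s a))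
    (hV : ∀ s, Differentiable ℝ (fun l => V l s))
    (l : Fin d → ℝ)
    (hbound : ∃ C, ∀ s, ‖fderiv ℝ (fun l' => V l' s) l‖ ≤ C)
    (hQ : ∀ l' s a, Q l' s a = R l' s a + γ * ∑ s', T s a s' * V l' s')
    (hVdef : ∀ l' s, V l' s = Real.log (∑ a, Real.exp (Q l' s a)))
    (pol : S → A → ℝ)
    (hpol : ∀ s a, pol s a = Real.exp (Q l s a) / ∑ a', Real.exp (Q l s a'))
    (PL : ℕ → S → ℝ) (hPL0 : ∀ s, PL 0 s = P0 s)
    (hPLrec : ∀ τ s', PL (τ + 1) s' = ∑ s, ∑ a, PL τ s * pol s a * T s a s') :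
    fderiv ℝ (fun l' => ∑ s, P0 s * V l' s) l
      = ∑ s, ∑ a,
          (∑' τ : ℕ, γ ^ τ * (PL τ s * pol s a)) •
            fderiv ℝ (fun l' => R l' s a) l := by
  classical
  set F : S → ((Fin d → ℝ) →L[ℝ] ℝ) := fun s => fderiv ℝ (fun l' => V l' s) l with hFdef
  set G : S → A → ((Fin d → ℝ) →L[ℝ] ℝ) := fun s a => fderiv ℝ (fun l' => R l' s a) l
    with hGdef
  -- derivative of Q
  have hQdiff : ∀ s a, HasFDerivAt (fun l' => Q l' s a)
      (G s a + γ • ∑ s', T s a s' • F s') l := by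
    intro s a
    have hfun : (fun l' => Q l' s a)
        = fun l' => R l' s a + γ * ∑ s', T s a s' * V l' s' := funext fun l' => hQ l' s a
    rw [hfun]
    have h2 : HasFDerivAt (fun l' => ∑ s', T s a s' * V l' s')
        (∑ s', T s a s' • F s') l :=
      HasFDerivAt.fun_sum fun s' _ => ((hV s') l).hasFDerivAt.const_mul (T s a s')
    exact ((hR s a) l).hasFDerivAt.add (h2.const_mul γ)
  have hsumpos : ∀ l' s, 0 < ∑ a, Real.exp (Q l' s a) :=
    fun l' s => Finset.sum_pos (fun a _ => Real.exp_pos _) Finset.univ_nonempty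
  -- derivative of V
  have hVderiv : ∀ s, HasFDerivAt (fun l' => V l' s)
      (∑ a, pol s a • (G s a + γ • ∑ s', T s a s' • F s')) l := by
    intro s
    have hfun : (fun l' => V l' s) = fun l' => Real.log (∑ a, Real.exp (Q l' s a)) :=
      funext fun l' => hVdef l' s
    rw [hfun]
    have hsum : HasFDerivAt (fun l' => ∑ a, Real.exp (Q l' s a))
        (∑ a, Real.exp (Q l s a) • (G s a + γ • ∑ s', T s a s' • F s')) l :=
      HasFDerivAt.fun_sum fun a _ => (hQdiff s a).exp
    have hlog := hsum.log (ne_of_gt (hsumpos l s))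
    convert hlog using 1
    · rfl
    · rfl
    · rfl
    rw [Finset.smul_sum]
    refine Finset.sum_congr rfl fun a _ => ?_
    rw [hpol, smul_smul, div_eq_inv_mul]
  have hF : ∀ s, F s = ∑ a, pol s a • (G s a + γ • ∑ s', T s a s' • F s') :=
    fun s => (hVderiv s).fderiv
  -- policy facts
  have hpolnn : ∀ s a, 0 ≤ pol s a := by
    intro s a
    rw [hpol]
    exact div_nonneg (Real.exp_pos _).le (hsumpos l s).le
  have hpolsum : ∀ s, ∑ a, pol s a = 1 := by
    intro s
    simp only [hpol]
    rw [← Finset.sum_div, div_self (ne_of_gt (hsumpos l s))]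
  have hpolle : ∀ s a, pol s a ≤ 1 := by
    intro s a
    rw [← hpolsum s]
    exact Finset.single_le_sum (fun a' _ => hpolnn s a') (Finset.mem_univ a)
  -- PL facts
  have hPLnn : ∀ τ s, 0 ≤ PL τ s := by
    intro τ
    induction τ with
    | zero => intro s; rw [hPL0]; exact hP0 s
    | succ n ih =>
      intro s'
      rw [hPLrec]
      refine Finset.sum_nonneg fun s _ => Finset.sum_nonneg fun a _ => ?_
      exact mul_nonneg (mul_nonneg (ih s) (hpolnn s a)) (hT s a s')
  have hPLsum : ∀ τ, ∑ s, PL τ s = 1 := by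
    intro τ
    induction τ with
    | zero => simp only [hPL0]; exact hP0sum
    | succ n ih =>
      simp only [hPLrec]
      rw [Finset.sum_comm]
      have : ∀ s, ∑ s', ∑ a, PL n s * pol s a * T s a s' = PL n s := by
        intro s
        rw [Finset.sum_comm]
        calc ∑ a, ∑ s', PL n s * pol s a * T s a s'
            = ∑ a, PL n s * pol s a := by
              refine Finset.sum_congr rfl fun a _ => ?_
              rw [← Finset.mul_sum, hTsum, mul_one]
          _ = PL n s := by rw [← Finset.mul_sum, hpolsum, mul_one]
      rw [Finset.sum_congr rfl fun s _ => this s, ih]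
  have hPLle : ∀ τ s, PL τ s ≤ 1 := by
    intro τ s
    rw [← hPLsum τ]
    exact Finset.single_le_sum (fun s' _ => hPLnn τ s') (Finset.mem_univ s)
  -- bound on F
  obtain ⟨C, hC⟩ := hbound
  set C' : ℝ := max C 0 with hC'def
  have hC' : ∀ s, ‖F s‖ ≤ C' := fun s => (hC s).trans (le_max_left _ _)
  -- the key telescoping identity
  have key : ∀ N : ℕ, (∑ s, P0 s • F s)
      = (∑ τ ∈ Finset.range N, ∑ s, ∑ a, (γ ^ τ * (PL τ s * pol s a)) • G s a)
        + γ ^ N • ∑ s, PL N s • F s := by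
    intro N
    induction N with
    | zero => simp [hPL0]
    | succ N ih =>
      rw [ih, Finset.sum_range_succ, add_assoc]
      congr 1
      have expand : ∑ s, PL N s • F s
          = (∑ s, ∑ a, (PL N s * pol s a) • G s a)
            + γ • ∑ s', PL (N + 1) s' • F s' := by
        have step1 : ∑ s, PL N s • F s
            = ∑ s, ∑ a, ((PL N s * pol s a) • G s a
                + γ • ∑ s', (PL N s * pol s a * T s a s') • F s') := by
          refine Finset.sum_congr rfl fun s _ => ?_
          rw [hF s, Finset.smul_sum]
          refine Finset.sum_congr rfl fun a _ => ?_
          simp only [smul_add, Finset.smul_sum, smul_smul]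
          congr 1
          refine Finset.sum_congr rfl fun s' _ => ?_
          congr 1
          ring
        rw [step1]
        have hdist : ∀ s : S, ∑ a, ((PL N s * pol s a) • G s a
              + γ • ∑ s', (PL N s * pol s a * T s a s') • F s')
            = (∑ a, (PL N s * pol s a) • G s a)
              + ∑ a, γ • ∑ s', (PL N s * pol s a * T s a s') • F s' :=
          fun s => Finset.sum_add_distrib
        simp only [hdist]
        rw [Finset.sum_add_distrib]
        congr 1
        · simp only [← Finset.smul_sum]
          congr 1
          have : ∀ s', PL (N + 1) s' • F s'
              = ∑ s, ∑ a, (PL N s * pol s a * T s a s') • F s' := by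
            intro s'
            rw [hPLrec]
            rw [Finset.sum_smul]
            exact Finset.sum_congr rfl fun s _ => Finset.sum_smul
          calc ∑ s, ∑ a, ∑ s', (PL N s * pol s a * T s a s') • F s'
              = ∑ s, ∑ s', ∑ a, (PL N s * pol s a * T s a s') • F s' :=
                Finset.sum_congr rfl fun s _ => Finset.sum_comm
            _ = ∑ s', ∑ s, ∑ a, (PL N s * pol s a * T s a s') • F s' :=
                Finset.sum_comm
            _ = ∑ s', PL (N + 1) s' • F s' := by
                exact Finset.sum_congr rfl fun s' _ => (this s').symm
      rw [expand, smul_add, smul_smul, ← pow_succ]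
      congr 1
      rw [Finset.smul_sum]
      refine Finset.sum_congr rfl fun s _ => ?_
      rw [Finset.smul_sum]
      refine Finset.sum_congr rfl fun a _ => ?_
      rw [smul_smul]
  -- summability
  have hsummable : ∀ s a, Summable (fun τ : ℕ => γ ^ τ * (PL τ s * pol s a)) := by
    intro s a
    refine Summable.of_norm_bounded (summable_geometric_of_lt_one hγ0 hγ1) fun τ => ?_
    rw [Real.norm_eq_abs, abs_mul, abs_of_nonneg (pow_nonneg hγ0 τ)]
    have h1 : |PL τ s * pol s a| ≤ 1 := by
      rw [abs_of_nonneg (mul_nonneg (hPLnn τ s) (hpolnn s a))]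
      calc PL τ s * pol s a ≤ 1 * 1 :=
            mul_le_mul (hPLle τ s) (hpolle s a) (hpolnn s a) zero_le_one
        _ = 1 := one_mul 1
    calc γ ^ τ * |PL τ s * pol s a| ≤ γ ^ τ * 1 :=
          mul_le_mul_of_nonneg_left h1 (pow_nonneg hγ0 τ)
      _ = γ ^ τ := mul_one _
  -- partial sums tend to the RHS
  have hpartial : Filter.Tendsto
      (fun N => ∑ τ ∈ Finset.range N, ∑ s, ∑ a, (γ ^ τ * (PL τ s * pol s a)) • G s a)
      Filter.atTop
      (nhds (∑ s, ∑ a, (∑' τ : ℕ, γ ^ τ * (PL τ s * pol s a)) • G s a)) := by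
    have hswap : ∀ N, ∑ τ ∈ Finset.range N, ∑ s, ∑ a, (γ ^ τ * (PL τ s * pol s a)) • G s a
        = ∑ s, ∑ a, (∑ τ ∈ Finset.range N, γ ^ τ * (PL τ s * pol s a)) • G s a := by
      intro N
      rw [Finset.sum_comm]
      refine Finset.sum_congr rfl fun s _ => ?_
      rw [Finset.sum_comm]
      refine Finset.sum_congr rfl fun a _ => ?_
      rw [Finset.sum_smul]
    simp only [hswap]
    refine tendsto_finset_sum _ fun s _ => ?_
    refine tendsto_finset_sum _ fun a _ => ?_
    exact ((hsummable s a).hasSum.tendsto_sum_nat).smul_const (G s a)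
  -- tail tends to 0
  have htail : Filter.Tendsto (fun N : ℕ => γ ^ N • ∑ s, PL N s • F s)
      Filter.atTop (nhds 0) := by
    have hbnd : ∀ N : ℕ, ‖γ ^ N • ∑ s, PL N s • F s‖ ≤ C' * γ ^ N := by
      intro N
      have hbody : ‖∑ s, PL N s • F s‖ ≤ C' := by
        calc ‖∑ s, PL N s • F s‖ ≤ ∑ s, ‖PL N s • F s‖ := norm_sum_le _ _
          _ ≤ ∑ s, PL N s * C' := by
              refine Finset.sum_le_sum fun s _ => ?_
              calc ‖PL N s • F s‖ ≤ ‖PL N s‖ * ‖F s‖ := by exact norm_smul_le (PL N s) (F s)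
                _ = PL N s * ‖F s‖ := by
                    rw [Real.norm_eq_abs, abs_of_nonneg (hPLnn N s)]
                _ ≤ PL N s * C' := mul_le_mul_of_nonneg_left (hC' s) (hPLnn N s)
          _ = C' := by rw [← Finset.sum_mul, hPLsum, one_mul]
      calc ‖γ ^ N • ∑ s, PL N s • F s‖
          ≤ ‖(γ : ℝ) ^ N‖ * ‖∑ s, PL N s • F s‖ := by exact norm_smul_le (γ ^ N) (∑ s, PL N s • F s)
        _ = γ ^ N * ‖∑ s, PL N s • F s‖ := by
            rw [Real.norm_eq_abs, abs_of_nonneg (pow_nonneg hγ0 N)]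
        _ ≤ γ ^ N * C' := mul_le_mul_of_nonneg_left hbody (pow_nonneg hγ0 N)
        _ = C' * γ ^ N := mul_comm _ _
    have h0 : Filter.Tendsto (fun N : ℕ => C' * γ ^ N) Filter.atTop (nhds 0) := by
      have := (tendsto_pow_atTop_nhds_zero_of_lt_one hγ0 hγ1).const_mul C'
      simpa using this
    exact squeeze_zero_norm hbnd h0
  -- the partial sums also tend to the LHS
  have hD : Filter.Tendsto
      (fun N => ∑ τ ∈ Finset.range N, ∑ s, ∑ a, (γ ^ τ * (PL τ s * pol s a)) • G s a)
      Filter.atTop (nhds (∑ s, P0 s • F s)) := by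
    have heq : (fun N => ∑ τ ∈ Finset.range N, ∑ s, ∑ a, (γ ^ τ * (PL τ s * pol s a)) • G s a)
        = fun N => (∑ s, P0 s • F s) - γ ^ N • ∑ s, PL N s • F s := by
      funext N
      rw [key N, add_sub_cancel_right]
    rw [heq]
    simpa using Filter.Tendsto.sub (tendsto_const_nhds
      (x := ∑ s, P0 s • F s) (f := Filter.atTop)) htail
  have hEq := tendsto_nhds_unique hD hpartial
  have hLHS : fderiv ℝ (fun l' => ∑ s, P0 s * V l' s) l = ∑ s, P0 s • F s :=
    (HasFDerivAt.fun_sum fun s _ => ((hV s) l).hasFDerivAt.const_mul (P0 s)).fderiv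
  rw [hLHS, hEq]
end

section
/- MCE-IRL gradient (Proposition 1): the discounted negative log-likelihood c(λ) = E_{(s_τ,a_τ) ∼ (π^E, M)} [ −Σ_τ γ^τ log π_λ(a_τ|s_τ) ] of the expert's trajectories under the learner's softmax policy π_λ has gradient ∇_λ c(λ) = Σ_{s,a} [ ρ^{π_λ}(s,a) − ρ^{π^E}(s,a) ] ∇_λ R_λ(s,a), where ρ^{π_λ} and ρ^{π^E} are the discounted state-action occupancy measures of learner and expert, respectively. -/
open Finset Filter



private lemma prob_le_one {ι : Type*} [Fintype ι] (p : ι → ℝ) (h0 : ∀ i, 0 ≤ p i)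
    (h1 : ∑ i, p i = 1) (i : ι) : p i ≤ 1 := by
  have := Finset.single_le_sum (f := p) (fun j _ => h0 j) (Finset.mem_univ i)
  rw [h1] at this; exact this

private lemma weighted_abs_le {ι : Type*} [Fintype ι] (p x : ι → ℝ) (h0 : ∀ i, 0 ≤ p i)
    (h1 : ∀ i, p i ≤ 1) : |∑ i, p i * x i| ≤ ∑ i, |x i| := by
  calc |∑ i, p i * x i| ≤ ∑ i, |p i * x i| := Finset.abs_sum_le_sum_abs _ _
    _ ≤ ∑ i, |x i| := Finset.sum_le_sum fun i _ => by
        rw [abs_mul, abs_of_nonneg (h0 i)]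
        exact mul_le_of_le_one_left (abs_nonneg _) (h1 i)

private lemma weighted_abs_le2 {ι κ : Type*} [Fintype ι] [Fintype κ] (p x : ι → κ → ℝ)
    (h0 : ∀ i j, 0 ≤ p i j) (h1 : ∀ i j, p i j ≤ 1) :
    |∑ i, ∑ j, p i j * x i j| ≤ ∑ i, ∑ j, |x i j| := by
  calc |∑ i, ∑ j, p i j * x i j| ≤ ∑ i, |∑ j, p i j * x i j| := Finset.abs_sum_le_sum_abs _ _
    _ ≤ ∑ i, ∑ j, |x i j| :=
        Finset.sum_le_sum fun i _ => weighted_abs_le _ _ (h0 i) (h1 i)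

private lemma summable_of_geom_bound {γ : ℝ} (h0 : 0 ≤ γ) (h1 : γ < 1) (u : ℕ → ℝ) (C : ℝ)
    (h : ∀ n, |u n| ≤ γ ^ n * C) : Summable u :=
  Summable.of_norm_bounded ((summable_geometric_of_lt_one h0 h1).mul_right C)
    (by simpa [Real.norm_eq_abs] using h)

private lemma chain_facts {S A : Type} [Fintype S] [Fintype A]
    (P0 : S → ℝ) (hP0 : ∀ s, 0 ≤ P0 s) (hP0sum : ∑ s, P0 s = 1)
    (T : S → A → S → ℝ) (hT : ∀ s a s', 0 ≤ T s a s') (hTsum : ∀ s a, ∑ s', T s a s' = 1)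
    (p : S → A → ℝ) (hp : ∀ s a, 0 ≤ p s a) (hpsum : ∀ s, ∑ a, p s a = 1)
    (P : ℕ → S → ℝ) (hP_0 : ∀ s, P 0 s = P0 s)
    (hPrec : ∀ τ s', P (τ + 1) s' = ∑ s, ∑ a, P τ s * p s a * T s a s') :
    (∀ τ s, 0 ≤ P τ s) ∧ (∀ τ, ∑ s, P τ s = 1) := by
  have hnn : ∀ τ s, 0 ≤ P τ s := by
    intro τ
    induction τ with
    | zero => intro s; rw [hP_0]; exact hP0 s
    | succ τ ih =>
      intro s'; rw [hPrec]
      exact Finset.sum_nonneg fun s _ => Finset.sum_nonneg fun a _ =>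
        mul_nonneg (mul_nonneg (ih s) (hp s a)) (hT s a s')
  refine ⟨hnn, ?_⟩
  intro τ
  induction τ with
  | zero => simp only [hP_0]; exact hP0sum
  | succ τ ih =>
    calc ∑ s', P (τ + 1) s' = ∑ s', ∑ s, ∑ a, P τ s * p s a * T s a s' := by
          simp only [hPrec]
      _ = ∑ s, ∑ a, ∑ s', P τ s * p s a * T s a s' := by
          rw [Finset.sum_comm]
          exact Finset.sum_congr rfl fun s _ => Finset.sum_comm
      _ = ∑ s, ∑ a, P τ s * p s a := by
          refine Finset.sum_congr rfl fun s _ => Finset.sum_congr rfl fun a _ => ?_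
          rw [← Finset.mul_sum, hTsum, mul_one]
      _ = ∑ s, P τ s := by
          refine Finset.sum_congr rfl fun s _ => ?_
          rw [← Finset.mul_sum, hpsum, mul_one]
      _ = 1 := ih

private lemma expert_closed_form {S A : Type} [Fintype S] [Fintype A]
    (γ : ℝ) (hγ0 : 0 ≤ γ) (hγ1 : γ < 1)
    (P0 : S → ℝ) (T : S → A → S → ℝ)
    (polE : S → A → ℝ) (hpolEnn : ∀ s a, 0 ≤ polE s a) (hpolEsum : ∀ s, ∑ a, polE s a = 1)
    (PEs : ℕ → S → ℝ) (hPEs0 : ∀ s, PEs 0 s = P0 s)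
    (hPEsrec : ∀ τ s', PEs (τ + 1) s' = ∑ s, ∑ a, PEs τ s * polE s a * T s a s')
    (hPEsnn : ∀ τ s, 0 ≤ PEs τ s) (hPEssum : ∀ τ, ∑ s, PEs τ s = 1)
    (PE : ℕ → S → A → ℝ) (hPE : ∀ τ s a, PE τ s a = PEs τ s * polE s a)
    (v : S → ℝ) (r q : S → A → ℝ)
    (hq : ∀ s a, q s a = r s a + γ * ∑ s', T s a s' * v s') :
    ∑' τ : ℕ, γ ^ τ * ∑ s, ∑ a, PE τ s a * (q s a - v s)
      = (∑ s, ∑ a, (∑' τ : ℕ, γ ^ τ * PE τ s a) * r s a) - ∑ s, P0 s * v s := by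
  have hPEnn : ∀ τ s a, 0 ≤ PE τ s a := fun τ s a => by
    rw [hPE]; exact mul_nonneg (hPEsnn τ s) (hpolEnn s a)
  have hPEs1 : ∀ τ s, PEs τ s ≤ 1 := fun τ => prob_le_one _ (hPEsnn τ) (hPEssum τ)
  have hpolE1 : ∀ s a, polE s a ≤ 1 := fun s => prob_le_one _ (hpolEnn s) (hpolEsum s)
  have hPE1 : ∀ τ s a, PE τ s a ≤ 1 := fun τ s a => by
    rw [hPE]; exact mul_le_one₀ (hPEs1 τ s) (hpolEnn s a) (hpolE1 s a)
  set f : ℕ → ℝ := fun τ => γ ^ τ * ∑ s, PEs τ s * v s with hf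
  set t1 : ℕ → ℝ := fun τ => γ ^ τ * ∑ s, ∑ a, PE τ s a * r s a with ht1
  -- per-step identity
  have key : ∀ τ, γ ^ τ * (∑ s, ∑ a, PE τ s a * (q s a - v s)) = t1 τ + (f (τ + 1) - f τ) := by
    intro τ
    have hA : ∑ s, ∑ a, PE τ s a * (∑ s', T s a s' * v s') = ∑ s', PEs (τ + 1) s' * v s' := by
      calc ∑ s, ∑ a, PE τ s a * (∑ s', T s a s' * v s')
          = ∑ s, ∑ s', ∑ a, PE τ s a * (T s a s' * v s') := by
            refine Finset.sum_congr rfl fun s _ => ?_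
            simp only [Finset.mul_sum]
            exact Finset.sum_comm
        _ = ∑ s', ∑ s, ∑ a, PE τ s a * (T s a s' * v s') := Finset.sum_comm
        _ = ∑ s', PEs (τ + 1) s' * v s' := by
            refine Finset.sum_congr rfl fun s' _ => ?_
            rw [hPEsrec, Finset.sum_mul]
            refine Finset.sum_congr rfl fun s _ => ?_
            rw [Finset.sum_mul]
            refine Finset.sum_congr rfl fun a _ => ?_
            rw [hPE]; ring
    have hB : ∑ s, ∑ a, PE τ s a * v s = ∑ s, PEs τ s * v s := by
      refine Finset.sum_congr rfl fun s _ => ?_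
      calc ∑ a, PE τ s a * v s = ∑ a, (PEs τ s * v s) * polE s a :=
            Finset.sum_congr rfl fun a _ => by rw [hPE]; ring
        _ = (PEs τ s * v s) * ∑ a, polE s a := by rw [← Finset.mul_sum]
        _ = PEs τ s * v s := by rw [hpolEsum, mul_one]
    have hsplit : ∑ s, ∑ a, PE τ s a * (q s a - v s)
        = (∑ s, ∑ a, PE τ s a * r s a)
          + γ * (∑ s', PEs (τ + 1) s' * v s') - ∑ s, PEs τ s * v s := by
      calc ∑ s, ∑ a, PE τ s a * (q s a - v s)
          = ∑ s, ∑ a, (PE τ s a * r s a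
              + γ * (PE τ s a * (∑ s', T s a s' * v s')) - PE τ s a * v s) :=
            Finset.sum_congr rfl fun s _ => Finset.sum_congr rfl fun a _ => by rw [hq]; ring
        _ = (∑ s, ∑ a, PE τ s a * r s a)
              + γ * (∑ s, ∑ a, PE τ s a * (∑ s', T s a s' * v s'))
              - ∑ s, ∑ a, PE τ s a * v s := by
            simp only [Finset.sum_add_distrib, Finset.sum_sub_distrib, ← Finset.mul_sum]
        _ = _ := by rw [hA, hB]
    rw [hsplit, hf, ht1]; simp only; ring
  -- summability
  have ht1s : Summable t1 := by
    refine summable_of_geom_bound hγ0 hγ1 _ (∑ s, ∑ a, |r s a|) fun n => ?_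
    rw [ht1]; simp only
    rw [abs_mul, abs_of_nonneg (pow_nonneg hγ0 n)]
    exact mul_le_mul_of_nonneg_left
      (weighted_abs_le2 _ _ (hPEnn n) (hPE1 n)) (pow_nonneg hγ0 n)
  have hfs : Summable f := by
    refine summable_of_geom_bound hγ0 hγ1 _ (∑ s, |v s|) fun n => ?_
    rw [hf]; simp only
    rw [abs_mul, abs_of_nonneg (pow_nonneg hγ0 n)]
    exact mul_le_mul_of_nonneg_left
      (weighted_abs_le _ _ (hPEsnn n) (hPEs1 n)) (pow_nonneg hγ0 n)
  have hfs' : Summable (fun τ => f (τ + 1)) := (summable_nat_add_iff 1).mpr hfs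
  -- assemble
  have h1 : ∑' τ : ℕ, γ ^ τ * ∑ s, ∑ a, PE τ s a * (q s a - v s)
      = (∑' τ, t1 τ) + ((∑' τ, f (τ + 1)) - ∑' τ, f τ) := by
    rw [tsum_congr key, Summable.tsum_add ht1s (hfs'.sub hfs), Summable.tsum_sub hfs' hfs]
  have htel : (∑' τ, f (τ + 1)) - ∑' τ, f τ = -f 0 := by
    have h := Summable.tsum_eq_zero_add hfs
    linarith
  have hsum_a : ∀ (s : S) (a : A), Summable (fun τ => (γ ^ τ * PE τ s a) * r s a) := by
    intro s a
    refine Summable.mul_right _ (summable_of_geom_bound hγ0 hγ1 _ 1 fun n => ?_)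
    rw [abs_mul, abs_of_nonneg (pow_nonneg hγ0 n), abs_of_nonneg (hPEnn n s a)]
    exact mul_le_mul_of_nonneg_left (hPE1 n s a) (pow_nonneg hγ0 n)
  have ht1eq : ∑' τ, t1 τ = ∑ s, ∑ a, (∑' τ : ℕ, γ ^ τ * PE τ s a) * r s a := by
    calc ∑' τ, t1 τ = ∑' τ, ∑ s, ∑ a, (γ ^ τ * PE τ s a) * r s a := by
          refine tsum_congr fun τ => ?_
          rw [ht1]; simp only [Finset.mul_sum]
          exact Finset.sum_congr rfl fun s _ => Finset.sum_congr rfl fun a _ => by ring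
      _ = ∑ s, ∑' τ, ∑ a, (γ ^ τ * PE τ s a) * r s a :=
          Summable.tsum_finsetSum fun s _ => summable_sum fun a _ => hsum_a s a
      _ = ∑ s, ∑ a, ∑' τ, (γ ^ τ * PE τ s a) * r s a :=
          Finset.sum_congr rfl fun s _ => Summable.tsum_finsetSum fun a _ => hsum_a s a
      _ = ∑ s, ∑ a, (∑' τ : ℕ, γ ^ τ * PE τ s a) * r s a :=
          Finset.sum_congr rfl fun s _ => Finset.sum_congr rfl fun a _ => tsum_mul_right
  have hf0 : f 0 = ∑ s, P0 s * v s := by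
    rw [hf]; simp only [pow_zero, one_mul]
    exact Finset.sum_congr rfl fun s _ => by rw [hPEs0]
  rw [h1, htel, ht1eq, hf0]; ring

private lemma occupancy_expand {S A : Type} [Fintype S] [Fintype A]
    (γ : ℝ) (hγ0 : 0 ≤ γ) (hγ1 : γ < 1)
    (P0 : S → ℝ) (T : S → A → S → ℝ)
    (pol : S → A → ℝ) (hpolnn : ∀ s a, 0 ≤ pol s a) (hpolsum : ∀ s, ∑ a, pol s a = 1)
    (PL : ℕ → S → ℝ) (hPL0 : ∀ s, PL 0 s = P0 s)
    (hPLrec : ∀ τ s', PL (τ + 1) s' = ∑ s, ∑ a, PL τ s * pol s a * T s a s')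
    (hPLnn : ∀ τ s, 0 ≤ PL τ s) (hPLsum : ∀ τ, ∑ s, PL τ s = 1)
    (w : S → ℝ) (e : S → A → ℝ)
    (hw : ∀ s, w s = ∑ a, pol s a * (e s a + γ * ∑ s', T s a s' * w s')) :
    ∑ s, P0 s * w s = ∑ s, ∑ a, (∑' τ : ℕ, γ ^ τ * (PL τ s * pol s a)) * e s a := by
  have hPL1 : ∀ τ s, PL τ s ≤ 1 := fun τ => prob_le_one _ (hPLnn τ) (hPLsum τ)
  have hpol1 : ∀ s a, pol s a ≤ 1 := fun s => prob_le_one _ (hpolnn s) (hpolsum s)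
  set F : ℕ → ℝ := fun N => ∑ s, PL N s * w s with hF
  set G : ℕ → ℝ := fun τ => ∑ s, ∑ a, (PL τ s * pol s a) * e s a with hG
  have hstep : ∀ N, F N = G N + γ * F (N + 1) := by
    intro N
    have h2 : ∀ (s : S) (a : A), (PL N s * pol s a) * (γ * ∑ s', T s a s' * w s')
        = ∑ s', γ * ((PL N s * pol s a * T s a s') * w s') := by
      intro s a
      rw [Finset.mul_sum, Finset.mul_sum]
      exact Finset.sum_congr rfl fun s' _ => by ring
    have h1 : F N = ∑ s, ∑ a, ((PL N s * pol s a) * e s a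
        + ∑ s', γ * ((PL N s * pol s a * T s a s') * w s')) := by
      simp only [hF]
      refine Finset.sum_congr rfl fun s _ => ?_
      rw [hw s, Finset.mul_sum]
      refine Finset.sum_congr rfl fun a _ => ?_
      rw [← h2 s a]; ring
    have h4 : γ * ∑ s', (∑ s, ∑ a, PL N s * pol s a * T s a s') * w s'
        = ∑ s', ∑ s, ∑ a, γ * ((PL N s * pol s a * T s a s') * w s') := by
      rw [Finset.mul_sum]
      refine Finset.sum_congr rfl fun s' _ => ?_
      rw [Finset.sum_mul, Finset.mul_sum]
      refine Finset.sum_congr rfl fun s _ => ?_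
      rw [Finset.sum_mul, Finset.mul_sum]
    have h3 : ∑ s, ∑ a, ∑ s', γ * ((PL N s * pol s a * T s a s') * w s')
        = γ * F (N + 1) := by
      have swap : ∑ s, ∑ a, ∑ s', γ * ((PL N s * pol s a * T s a s') * w s')
          = ∑ s', ∑ s, ∑ a, γ * ((PL N s * pol s a * T s a s') * w s') :=
        (Finset.sum_congr rfl fun s _ => Finset.sum_comm).trans Finset.sum_comm
      rw [swap, ← h4]
      simp only [hF, hPLrec]
    calc F N = ∑ s, ∑ a, ((PL N s * pol s a) * e s a
          + ∑ s', γ * ((PL N s * pol s a * T s a s') * w s')) := h1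
      _ = G N + ∑ s, ∑ a, ∑ s', γ * ((PL N s * pol s a * T s a s') * w s') := by
          simp only [hG, Finset.sum_add_distrib]
      _ = G N + γ * F (N + 1) := by rw [h3]
  have hiter : ∀ N, F 0 = (∑ τ ∈ Finset.range N, γ ^ τ * G τ) + γ ^ N * F N := by
    intro N
    induction N with
    | zero => simp
    | succ N ih => rw [ih, hstep N, Finset.sum_range_succ]; ring
  have hGsum : Summable (fun τ => γ ^ τ * G τ) := by
    refine summable_of_geom_bound hγ0 hγ1 _ (∑ s, ∑ a, |e s a|) fun n => ?_
    rw [abs_mul, abs_of_nonneg (pow_nonneg hγ0 n)]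
    refine mul_le_mul_of_nonneg_left ?_ (pow_nonneg hγ0 n)
    simp only [hG]
    exact weighted_abs_le2 _ _ (fun s a => mul_nonneg (hPLnn n s) (hpolnn s a))
      (fun s a => mul_le_one₀ (hPL1 n s) (hpolnn s a) (hpol1 s a))
  have htend : Tendsto (fun N => γ ^ N * F N) atTop (nhds 0) := by
    have hb : ∀ N, ‖γ ^ N * F N‖ ≤ γ ^ N * ∑ s, |w s| := by
      intro N
      rw [Real.norm_eq_abs, abs_mul, abs_of_nonneg (pow_nonneg hγ0 N)]
      refine mul_le_mul_of_nonneg_left ?_ (pow_nonneg hγ0 N)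
      simp only [hF]
      exact weighted_abs_le _ _ (hPLnn N) (hPL1 N)
    have ht : Tendsto (fun N : ℕ => γ ^ N * ∑ s, |w s|) atTop (nhds 0) := by
      have := (tendsto_pow_atTop_nhds_zero_of_lt_one hγ0 hγ1).mul_const (∑ s, |w s|)
      simpa using this
    exact squeeze_zero_norm hb ht
  have hlim : Tendsto (fun N => ∑ τ ∈ Finset.range N, γ ^ τ * G τ) atTop (nhds (F 0)) := by
    have heq : ∀ N, ∑ τ ∈ Finset.range N, γ ^ τ * G τ = F 0 - γ ^ N * F N := by
      intro N; rw [hiter N]; ring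
    have h : Tendsto (fun N : ℕ => F 0 - γ ^ N * F N) atTop (nhds (F 0 - 0)) :=
      Tendsto.sub tendsto_const_nhds htend
    rw [sub_zero] at h
    exact h.congr fun N => (heq N).symm
  have hF0 : F 0 = ∑' τ, γ ^ τ * G τ :=
    tendsto_nhds_unique hlim hGsum.hasSum.tendsto_sum_nat
  have hsum_a : ∀ (s : S) (a : A), Summable (fun τ => (γ ^ τ * (PL τ s * pol s a)) * e s a) := by
    intro s a
    refine Summable.mul_right _ (summable_of_geom_bound hγ0 hγ1 _ 1 fun n => ?_)
    rw [abs_mul, abs_of_nonneg (pow_nonneg hγ0 n),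
      abs_of_nonneg (mul_nonneg (hPLnn n s) (hpolnn s a))]
    exact mul_le_mul_of_nonneg_left
      (mul_le_one₀ (hPL1 n s) (hpolnn s a) (hpol1 s a)) (pow_nonneg hγ0 n)
  calc ∑ s, P0 s * w s = F 0 := by
        simp only [hF, hPL0]
    _ = ∑' τ, γ ^ τ * G τ := hF0
    _ = ∑' τ, ∑ s, ∑ a, (γ ^ τ * (PL τ s * pol s a)) * e s a := by
        refine tsum_congr fun τ => ?_
        simp only [hG, Finset.mul_sum]
        exact Finset.sum_congr rfl fun s _ => Finset.sum_congr rfl fun a _ => by ring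
    _ = ∑ s, ∑ a, ∑' τ, (γ ^ τ * (PL τ s * pol s a)) * e s a := by
        rw [Summable.tsum_finsetSum fun s _ => summable_sum fun a _ => hsum_a s a]
        exact Finset.sum_congr rfl fun s _ => Summable.tsum_finsetSum fun a _ => hsum_a s a
    _ = ∑ s, ∑ a, (∑' τ : ℕ, γ ^ τ * (PL τ s * pol s a)) * e s a :=
        Finset.sum_congr rfl fun s _ => Finset.sum_congr rfl fun a _ => tsum_mul_right


/-- MCE-IRL gradient (Proposition 1): the gradient of the discounted negative
log-likelihood of the expert's trajectories under the learner's softmax policy is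
`∇c(λ) = Σ_{s,a} [ρ^{π_λ}(s,a) − ρ^{π^E}(s,a)] ∇R_λ(s,a)`. -/
theorem mce_irl_gradient {d : ℕ} {S A : Type} [Fintype S] [Fintype A]
    [Nonempty S] [Nonempty A]
    (γ : ℝ) (hγ0 : 0 ≤ γ) (hγ1 : γ < 1)
    (P0 : S → ℝ) (hP0 : ∀ s, 0 ≤ P0 s) (hP0sum : ∑ s, P0 s = 1)
    (T : S → A → S → ℝ) (hT : ∀ s a s', 0 ≤ T s a s')
    (hTsum : ∀ s a, ∑ s', T s a s' = 1)
    -- expert policy and visitation probabilities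
    (polE : S → A → ℝ) (hpolE : ∀ s a, 0 ≤ polE s a) (hpolEsum : ∀ s, ∑ a, polE s a = 1)
    (PEs : ℕ → S → ℝ) (hPEs0 : ∀ s, PEs 0 s = P0 s)
    (hPEsrec : ∀ τ s', PEs (τ + 1) s' = ∑ s, ∑ a, PEs τ s * polE s a * T s a s')
    (PE : ℕ → S → A → ℝ) (hPE : ∀ τ s a, PE τ s a = PEs τ s * polE s a)
    -- learner: soft Bellman quantities
    (R Q : (Fin d → ℝ) → S → A → ℝ) (V : (Fin d → ℝ) → S → ℝ)
    (hR : ∀ s a, Differentiable ℝ (fun l => R l s a))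
    (hV : ∀ s, Differentiable ℝ (fun l => V l s))
    (l : Fin d → ℝ)
    (hbound : ∃ C, ∀ s, ‖fderiv ℝ (fun l' => V l' s) l‖ ≤ C)
    (hQ : ∀ l' s a, Q l' s a = R l' s a + γ * ∑ s', T s a s' * V l' s')
    (hVdef : ∀ l' s, V l' s = Real.log (∑ a, Real.exp (Q l' s a)))
    (pol : S → A → ℝ)
    (hpol : ∀ s a, pol s a = Real.exp (Q l s a - V l s))
    (PL : ℕ → S → ℝ) (hPL0 : ∀ s, PL 0 s = P0 s)
    (hPLrec : ∀ τ s', PL (τ + 1) s' = ∑ s, ∑ a, PL τ s * pol s a * T s a s')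
    -- the discounted negative log-likelihood
    (c : (Fin d → ℝ) → ℝ)
    (hc : ∀ l', c l' = -∑' τ : ℕ, γ ^ τ * ∑ s, ∑ a, PE τ s a * (Q l' s a - V l' s)) :
    fderiv ℝ c l
      = ∑ s, ∑ a,
          ((∑' τ : ℕ, γ ^ τ * (PL τ s * pol s a)) - ∑' τ : ℕ, γ ^ τ * PE τ s a) •
            fderiv ℝ (fun l' => R l' s a) l := by
  obtain ⟨hPEsnn, hPEssum⟩ :=
    chain_facts P0 hP0 hP0sum T hT hTsum polE hpolE hpolEsum PEs hPEs0 hPEsrec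
  -- positivity of the softmax normalizer
  have hexpQpos : ∀ (l'' : Fin d → ℝ) (s : S), 0 < ∑ a, Real.exp (Q l'' s a) :=
    fun l'' s => Finset.sum_pos (fun a _ => Real.exp_pos _) Finset.univ_nonempty
  have hpol' : ∀ s a, pol s a = Real.exp (Q l s a) * (∑ b, Real.exp (Q l s b))⁻¹ := by
    intro s a
    rw [hpol, Real.exp_sub, hVdef, Real.exp_log (hexpQpos l s), div_eq_mul_inv]
  have hpolnn : ∀ s a, 0 ≤ pol s a := fun s a => by rw [hpol]; positivity
  have hpolsum : ∀ s, ∑ a, pol s a = 1 := by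
    intro s
    calc ∑ a, pol s a = ∑ a, Real.exp (Q l s a) * (∑ b, Real.exp (Q l s b))⁻¹ :=
          Finset.sum_congr rfl fun a _ => hpol' s a
      _ = (∑ a, Real.exp (Q l s a)) * (∑ b, Real.exp (Q l s b))⁻¹ := by
          rw [← Finset.sum_mul]
      _ = 1 := mul_inv_cancel₀ (ne_of_gt (hexpQpos l s))
  obtain ⟨hPLnn, hPLsum⟩ :=
    chain_facts P0 hP0 hP0sum T hT hTsum pol hpolnn hpolsum PL hPL0 hPLrec
  -- derivative of Q
  have hQhas : ∀ s a, HasFDerivAt (fun l' => Q l' s a)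
      (fderiv ℝ (fun l' => R l' s a) l
        + γ • ∑ s', T s a s' • fderiv ℝ (fun l' => V l' s') l) l := by
    intro s a
    have h1 : HasFDerivAt (fun l' => ∑ s', T s a s' * V l' s')
        (∑ s', T s a s' • fderiv ℝ (fun l' => V l' s') l) l :=
      HasFDerivAt.fun_sum fun s' _ => ((hV s' l).hasFDerivAt.const_mul (T s a s'))
    have h2 := ((hR s a l).hasFDerivAt).add (h1.const_mul γ)
    have h3 : (fun l' => Q l' s a) = fun l' => R l' s a + γ * ∑ s', T s a s' * V l' s' :=
      funext fun l' => hQ l' s a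
    rw [h3]; exact h2
  -- softmax gradient identity
  have hW_eq : ∀ s, fderiv ℝ (fun l' => V l' s) l
      = ∑ a, pol s a • (fderiv ℝ (fun l' => R l' s a) l
          + γ • ∑ s', T s a s' • fderiv ℝ (fun l' => V l' s') l) := by
    intro s
    have h1 : HasFDerivAt (fun l' => ∑ a, Real.exp (Q l' s a))
        (∑ a, Real.exp (Q l s a) • (fderiv ℝ (fun l' => R l' s a) l
          + γ • ∑ s', T s a s' • fderiv ℝ (fun l' => V l' s') l)) l :=
      HasFDerivAt.fun_sum fun a _ => (hQhas s a).exp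
    have h2 := h1.log (ne_of_gt (hexpQpos l s))
    have h3 : (fun l' => V l' s) = fun l' => Real.log (∑ a, Real.exp (Q l' s a)) :=
      funext fun l' => hVdef l' s
    have h4 : HasFDerivAt (fun l' => V l' s)
        ((∑ a, Real.exp (Q l s a))⁻¹ • ∑ a, Real.exp (Q l s a) •
          (fderiv ℝ (fun l' => R l' s a) l
            + γ • ∑ s', T s a s' • fderiv ℝ (fun l' => V l' s') l)) l := by
      rw [h3]; exact h2
    have h5 := h4.unique ((hV s l).hasFDerivAt)
    rw [← h5, Finset.smul_sum]
    refine Finset.sum_congr rfl fun a _ => ?_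
    rw [smul_smul]
    congr 1
    rw [hpol' s a]; ring
  -- closed form of the loss
  have hc' : ∀ l', c l' = -(∑ s, ∑ a, (∑' τ : ℕ, γ ^ τ * PE τ s a) * R l' s a)
      + ∑ s, P0 s * V l' s := by
    intro l'
    have hce := expert_closed_form γ hγ0 hγ1 P0 T polE hpolE hpolEsum PEs hPEs0 hPEsrec
      hPEsnn hPEssum PE hPE (V l') (R l') (Q l') (hQ l')
    rw [hc l', hce]; ring
  -- derivative of the loss
  have hchas : HasFDerivAt c
      (-(∑ s, ∑ a, (∑' τ : ℕ, γ ^ τ * PE τ s a) • fderiv ℝ (fun l' => R l' s a) l)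
        + ∑ s, P0 s • fderiv ℝ (fun l' => V l' s) l) l := by
    have hcf : c = fun l' => -(∑ s, ∑ a, (∑' τ : ℕ, γ ^ τ * PE τ s a) * R l' s a)
        + ∑ s, P0 s * V l' s := funext hc'
    rw [hcf]
    exact (HasFDerivAt.neg (HasFDerivAt.fun_sum fun s _ => HasFDerivAt.fun_sum fun a _ =>
        ((hR s a l).hasFDerivAt.const_mul _))).add
      (HasFDerivAt.fun_sum fun s _ => ((hV s l).hasFDerivAt.const_mul (P0 s)))
  -- unroll the learner occupancy
  have hkey : ∑ s, P0 s • fderiv ℝ (fun l' => V l' s) l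
      = ∑ s, ∑ a, (∑' τ : ℕ, γ ^ τ * (PL τ s * pol s a)) •
          fderiv ℝ (fun l' => R l' s a) l := by
    refine ContinuousLinearMap.ext fun y => ?_
    simp only [ContinuousLinearMap.sum_apply, ContinuousLinearMap.smul_apply, smul_eq_mul]
    refine occupancy_expand γ hγ0 hγ1 P0 T pol hpolnn hpolsum PL hPL0 hPLrec hPLnn hPLsum
      (fun s => fderiv ℝ (fun l' => V l' s) l y)
      (fun s a => fderiv ℝ (fun l' => R l' s a) l y) (fun s => ?_)
    have happ := congrArg (fun (f : (Fin d → ℝ) →L[ℝ] ℝ) => f y) (hW_eq s)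
    simp only [ContinuousLinearMap.sum_apply, ContinuousLinearMap.smul_apply,
      ContinuousLinearMap.add_apply, smul_eq_mul] at happ
    exact happ
  rw [hchas.fderiv, hkey, neg_add_eq_sub, ← Finset.sum_sub_distrib]
  refine Finset.sum_congr rfl fun s _ => ?_
  rw [← Finset.sum_sub_distrib]
  refine Finset.sum_congr rfl fun a _ => ?_
  exact (sub_smul _ _ _).symm
end

section
/- Contribution of a single timestep to the MCE-IRL gradient: for any τ ≥ 0, ∇_λ [ −γ^τ Σ_{s,a} P^E_τ(s,a) Q_λ(s,a) + γ^{τ+1} Σ_{s'} P^E_{τ+1}(s') V_λ(s') ] = −γ^τ Σ_{s,a} P^E_τ(s,a) ∇_λ R_λ(s,a), i.e., the value-gradient terms cancel via the Markov chain recursion. -/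
/-- Contribution of a single timestep to the MCE-IRL gradient: the value-gradient
terms cancel via the Markov chain recursion, leaving
`−γ^τ Σ_{s,a} P^E_τ(s,a) ∇R(s,a)`. -/
theorem single_timestep_gradient {d : ℕ} {S A : Type} [Fintype S] [Fintype A]
    [Nonempty S] [Nonempty A]
    (γ : ℝ) (hγ0 : 0 ≤ γ) (hγ1 : γ < 1)
    (T : S → A → S → ℝ)
    (R Q : (Fin d → ℝ) → S → A → ℝ) (V : (Fin d → ℝ) → S → ℝ)
    (hR : ∀ s a, Differentiable ℝ (fun l => R l s a))
    (hV : ∀ s, Differentiable ℝ (fun l => V l s))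
    (hQ : ∀ l s a, Q l s a = R l s a + γ * ∑ s', T s a s' * V l s')
    (τ : ℕ) (PEτ : S → A → ℝ) (PEτ' : S → ℝ)
    (hrec : ∀ s', PEτ' s' = ∑ s, ∑ a, PEτ s a * T s a s')
    (l : Fin d → ℝ) :
    fderiv ℝ
        (fun l' =>
          -(γ ^ τ * ∑ s, ∑ a, PEτ s a * Q l' s a)
            + γ ^ (τ + 1) * ∑ s', PEτ' s' * V l' s') l
      = -(γ ^ τ • ∑ s, ∑ a, PEτ s a • fderiv ℝ (fun l' => R l' s a) l) := by
  have hkey : ∀ l' : Fin d → ℝ, ∑ s', PEτ' s' * V l' s'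
      = ∑ s, ∑ a, PEτ s a * (∑ s', T s a s' * V l' s') := by
    intro l'
    calc ∑ s', PEτ' s' * V l' s'
        = ∑ s', ∑ s, ∑ a, PEτ s a * T s a s' * V l' s' := by
          refine Finset.sum_congr rfl fun s' _ => ?_
          rw [hrec, Finset.sum_mul]
          exact Finset.sum_congr rfl fun s _ => by rw [Finset.sum_mul]
      _ = ∑ s, ∑ s', ∑ a, PEτ s a * T s a s' * V l' s' := Finset.sum_comm
      _ = ∑ s, ∑ a, ∑ s', PEτ s a * T s a s' * V l' s' := by
          exact Finset.sum_congr rfl fun s _ => Finset.sum_comm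
      _ = ∑ s, ∑ a, PEτ s a * (∑ s', T s a s' * V l' s') := by
          refine Finset.sum_congr rfl fun s _ => Finset.sum_congr rfl fun a _ => ?_
          rw [Finset.mul_sum]
          exact Finset.sum_congr rfl fun s' _ => by ring
  have hfun : (fun l' : Fin d → ℝ =>
      -(γ ^ τ * ∑ s, ∑ a, PEτ s a * Q l' s a)
        + γ ^ (τ + 1) * ∑ s', PEτ' s' * V l' s')
      = fun l' => -(γ ^ τ * ∑ s, ∑ a, PEτ s a * R l' s a) := by
    funext l'
    rw [hkey]
    simp only [hQ, mul_add, Finset.sum_add_distrib, Finset.mul_sum]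
    simp only [pow_succ]
    ring_nf
  rw [hfun]
  have hdsum : ∀ s a, DifferentiableAt ℝ (fun l' => PEτ s a * R l' s a) l :=
    fun s a => ((hR s a).const_mul _).differentiableAt
  have hdsumA : ∀ s : S, DifferentiableAt ℝ
      (fun l' => ∑ a, PEτ s a * R l' s a) l :=
    fun s => DifferentiableAt.fun_sum fun a _ => hdsum s a
  have hdsumS : DifferentiableAt ℝ
      (fun l' => ∑ s, ∑ a, PEτ s a * R l' s a) l :=
    DifferentiableAt.fun_sum fun s _ => hdsumA s
  rw [fderiv_fun_neg, fderiv_const_mul hdsumS, fderiv_fun_sum fun s _ => hdsumA s]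
  congr 2
  refine Finset.sum_congr rfl fun s _ => ?_
  rw [fderiv_fun_sum fun a _ => hdsum s a]
  refine Finset.sum_congr rfl fun a _ => ?_
  rw [fderiv_const_mul ((hR s a).differentiableAt)]
end
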